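/- Let k ≤ m ≤ n be positive integers, r_1,…,r_m and c_1,…,c_n positive reals. Then F(k,r,c) = ∑ (−1)^{|I'|−|I|+|J'|−|J|} / ((∑_{i∉I} r_i)(∑_{j∉J} c_j)), where the sum is over quadruples of subsets I ⊆ I' ⊊ {1,…,m} and J ⊆ J' ⊊ {1,…,n} with |I'| + |J'| < k. -/

import Mathlib

section Helpers

lemma altsum (N t : ℕ) :
    ∑ s ∈ Finset.range (t+1), (-1:ℝ)^s * ((N+1).choose s : ℝ) = (-1)^t * (N.choose t : ℝ) := by
  induction t with
  | zero => simp
  | succ t ih =>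
      rw [Finset.sum_range_succ, ih, Nat.choose_succ_succ']
      push_cast
      ring

lemma vandermonde_range (M N t : ℕ) :
    ∑ a ∈ Finset.range (t+1), (M.choose a : ℝ) * (N.choose (t - a) : ℝ)
      = ((M + N).choose t : ℝ) := by
  rw [Nat.add_choose_eq, Finset.Nat.sum_antidiagonal_eq_sum_range_succ_mk]
  push_cast
  rfl

lemma keyC (M N t : ℕ) :
    ∑ a ∈ Finset.range (t+1), ∑ b ∈ Finset.range (t+1),
      (if a + b ≤ t then (-1:ℝ)^(a+b) * (M.choose a : ℝ) * ((N+1).choose b : ℝ) else 0)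
    = (-1)^t * ((M + N).choose t : ℝ) := by
  have step : ∀ a ∈ Finset.range (t+1),
      (∑ b ∈ Finset.range (t+1),
        (if a + b ≤ t then (-1:ℝ)^(a+b) * (M.choose a : ℝ) * ((N+1).choose b : ℝ) else 0))
      = (-1:ℝ)^t * ((M.choose a : ℝ) * (N.choose (t-a) : ℝ)) := by
    intro a ha
    rw [Finset.mem_range] at ha
    have ha' : a ≤ t := Nat.lt_succ_iff.mp ha
    rw [← Finset.sum_filter]
    have hfil : (Finset.range (t+1)).filter (fun b => a + b ≤ t) = Finset.range (t - a + 1) := by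
      ext b
      simp only [Finset.mem_filter, Finset.mem_range]
      omega
    rw [hfil]
    have : ∀ b, (-1:ℝ)^(a+b) * (M.choose a : ℝ) * ((N+1).choose b : ℝ)
        = ((-1:ℝ)^a * (M.choose a : ℝ)) * ((-1:ℝ)^b * ((N+1).choose b : ℝ)) := by
      intro b; rw [pow_add]; ring
    simp_rw [this]
    rw [← Finset.mul_sum, altsum]
    have hpow : (-1:ℝ)^a * (-1:ℝ)^(t-a) = (-1:ℝ)^t := by
      rw [← pow_add]
      congr 1
      omega
    calc (-1:ℝ)^a * (M.choose a : ℝ) * ((-1:ℝ)^(t-a) * (N.choose (t-a) : ℝ))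
        = ((-1:ℝ)^a * (-1:ℝ)^(t-a)) * ((M.choose a : ℝ) * (N.choose (t-a) : ℝ)) := by ring
      _ = (-1:ℝ)^t * ((M.choose a : ℝ) * (N.choose (t-a) : ℝ)) := by rw [hpow]
  rw [Finset.sum_congr rfl step, ← Finset.mul_sum, vandermonde_range]

lemma powerset_sum_card {α : Type*} [DecidableEq α] (S : Finset α) (f : ℕ → ℝ) :
    ∑ A ∈ S.powerset, f A.card = ∑ a ∈ Finset.range (S.card + 1), (S.card.choose a : ℝ) * f a := by
  rw [Finset.sum_powerset_apply_card]
  simp [nsmul_eq_mul]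

lemma sum_superset {α : Type*} [DecidableEq α] [Fintype α] (I : Finset α) (g : Finset α → ℝ) :
    ∑ I' : Finset α, (if I ⊆ I' then g I' else 0) = ∑ A ∈ Iᶜ.powerset, g (I ∪ A) := by
  rw [← Finset.sum_filter]
  refine Finset.sum_nbij' (fun I' => I' \ I) (fun A => I ∪ A) ?_ ?_ ?_ ?_ ?_
  · intro I' hI'
    rw [Finset.mem_filter] at hI'
    rw [Finset.mem_powerset]
    intro x hx
    rw [Finset.mem_sdiff] at hx
    simp [hx.2]
  · intro A hA
    simp [Finset.mem_filter]
  · intro I' hI'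
    rw [Finset.mem_filter] at hI'
    exact Finset.union_sdiff_of_subset hI'.2
  · intro A hA
    rw [Finset.mem_powerset] at hA
    apply Finset.union_sdiff_cancel_left
    rw [Finset.disjoint_left]
    intro x hxI hxA
    exact (Finset.mem_compl.mp (hA hxA)) hxI
  · intro I' hI'
    rw [Finset.mem_filter] at hI'
    rw [Finset.union_sdiff_of_subset hI'.2]

lemma powerset_sum_ite {α : Type*} [DecidableEq α] [Fintype α] (t : Finset α) (f : Finset α → ℝ) :
    ∑ x ∈ t.powerset, f x = ∑ x : Finset α, if x ⊆ t then f x else 0 := by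
  rw [← Finset.sum_filter]
  congr 1
  ext x
  simp

lemma swap4 {α β : Type*} [Fintype α] [Fintype β] [DecidableEq α] [DecidableEq β]
    (f : Finset α → Finset β → Finset α → Finset β → ℝ) :
    (∑ I' : Finset α, ∑ J' : Finset β, ∑ I : Finset α, ∑ J : Finset β, f I' J' I J)
      = ∑ I : Finset α, ∑ J : Finset β, ∑ I' : Finset α, ∑ J' : Finset β, f I' J' I J :=
  calc (∑ I' : Finset α, ∑ J' : Finset β, ∑ I : Finset α, ∑ J : Finset β, f I' J' I J)
      = ∑ I' : Finset α, ∑ I : Finset α, ∑ J' : Finset β, ∑ J : Finset β, f I' J' I J :=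
        Finset.sum_congr rfl fun I' _ => Finset.sum_comm
    _ = ∑ I : Finset α, ∑ I' : Finset α, ∑ J' : Finset β, ∑ J : Finset β, f I' J' I J :=
        Finset.sum_comm
    _ = ∑ I : Finset α, ∑ I' : Finset α, ∑ J : Finset β, ∑ J' : Finset β, f I' J' I J :=
        Finset.sum_congr rfl fun I _ => Finset.sum_congr rfl fun I' _ => Finset.sum_comm
    _ = ∑ I : Finset α, ∑ J : Finset β, ∑ I' : Finset α, ∑ J' : Finset β, f I' J' I J :=
        Finset.sum_congr rfl fun I _ => Finset.sum_comm

end Helpers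


/-- The conjectured formula `F(k,r,c)` for the expected minimum `k`-assignment of a random
exponential matrix with rank 1 rate matrix `(r i * c j)`: the sum over proper subsets
`I ⊊ {1,…,m}` and `J ⊊ {1,…,n}` with `|I| + |J| < k` of
`(−1)^{k−1−|I|−|J|} · C(m+n−1−|I|−|J|, k−1−|I|−|J|) / ((∑_{i∉I} r i)(∑_{j∉J} c j))`. -/
noncomputable def F (k : ℕ) {m n : ℕ} (r : Fin m → ℝ) (c : Fin n → ℝ) : ℝ :=
  ∑ I : Finset (Fin m), ∑ J : Finset (Fin n),
    if I ≠ Finset.univ ∧ J ≠ Finset.univ ∧ I.card + J.card < k then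
      (-1 : ℝ) ^ (k - 1 - I.card - J.card) *
        ((m + n - 1 - I.card - J.card).choose (k - 1 - I.card - J.card) : ℝ) /
        ((∑ i ∈ Iᶜ, r i) * (∑ j ∈ Jᶜ, c j))
    else 0

/-- Proposition (inclusion–exclusion form of `F`): `F(k,r,c)` equals the sum over
`I ⊆ I' ⊊ {1,…,m}` and `J ⊆ J' ⊊ {1,…,n}` with `|I'| + |J'| < k` of
`(−1)^{|I'|−|I|+|J'|−|J|} / ((∑_{i∉I} r i)(∑_{j∉J} c j))`. -/
theorem F_incl_excl (k m n : ℕ) (hk : 0 < k) (hkm : k ≤ m) (hmn : m ≤ n)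
    (r : Fin m → ℝ) (c : Fin n → ℝ) (hr : ∀ i, 0 < r i) (hc : ∀ j, 0 < c j) :
    F k r c =
      ∑ I' : Finset (Fin m), ∑ J' : Finset (Fin n),
        ∑ I ∈ I'.powerset, ∑ J ∈ J'.powerset,
          if I' ≠ Finset.univ ∧ J' ≠ Finset.univ ∧ I'.card + J'.card < k then
            (-1 : ℝ) ^ (I'.card - I.card + (J'.card - J.card)) /
              ((∑ i ∈ Iᶜ, r i) * (∑ j ∈ Jᶜ, c j))
          else 0 := by
  classical
  -- the generic 4-variable summand after pushing the subset conditions into ites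
  set X : Finset (Fin m) → Finset (Fin n) → Finset (Fin m) → Finset (Fin n) → ℝ :=
    fun I' J' I J =>
      if I' ≠ Finset.univ ∧ J' ≠ Finset.univ ∧ I'.card + J'.card < k then
        (-1 : ℝ) ^ (I'.card - I.card + (J'.card - J.card)) /
          ((∑ i ∈ Iᶜ, r i) * (∑ j ∈ Jᶜ, c j))
      else 0 with hX
  have hRHS : (∑ I' : Finset (Fin m), ∑ J' : Finset (Fin n),
        ∑ I ∈ I'.powerset, ∑ J ∈ J'.powerset, X I' J' I J)
      = ∑ I : Finset (Fin m), ∑ J : Finset (Fin n),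
          ∑ I' : Finset (Fin m), ∑ J' : Finset (Fin n),
            (if I ⊆ I' then (if J ⊆ J' then X I' J' I J else 0) else 0) := by
    rw [← swap4]
    refine Finset.sum_congr rfl fun I' _ => Finset.sum_congr rfl fun J' _ => ?_
    rw [powerset_sum_ite]
    refine Finset.sum_congr rfl fun I _ => ?_
    by_cases h : I ⊆ I'
    · rw [if_pos h, powerset_sum_ite]
      exact Finset.sum_congr rfl fun Jx _ => (if_pos h).symm
    · rw [if_neg h]
      exact (Finset.sum_eq_zero fun Jx _ => if_neg h).symm
  rw [hRHS]
  unfold F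
  refine Finset.sum_congr rfl fun I _ => Finset.sum_congr rfl fun J _ => ?_
  -- now fix I, J and compute the inner double sum
  have pull : ∀ I' : Finset (Fin m),
      (∑ J' : Finset (Fin n), if I ⊆ I' then (if J ⊆ J' then X I' J' I J else 0) else 0)
      = (if I ⊆ I' then (∑ J' : Finset (Fin n), if J ⊆ J' then X I' J' I J else 0) else 0) := by
    intro I'
    by_cases h : I ⊆ I' <;> simp [h]
  rw [Finset.sum_congr rfl fun I' _ => pull I']
  rw [sum_superset I (fun I' => ∑ J' : Finset (Fin n), if J ⊆ J' then X I' J' I J else 0)]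
  rw [Finset.sum_congr rfl (fun A _ => sum_superset J (fun J' => X (I ∪ A) J' I J))]
  by_cases hIJ : I.card + J.card < k
  · -- main case
    have hIm : I.card ≤ m := by
      simpa using Finset.card_le_card (Finset.subset_univ I)
    have hJn : J.card ≤ n := by
      simpa using Finset.card_le_card (Finset.subset_univ J)
    set t := k - 1 - I.card - J.card with ht
    have hInu : I ≠ Finset.univ := by
      intro h
      have : I.card = m := by rw [h, Finset.card_univ, Fintype.card_fin]
      omega
    have hJnu : J ≠ Finset.univ := by
      intro h
      have : J.card = n := by rw [h, Finset.card_univ, Fintype.card_fin]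
      omega
    rw [if_pos ⟨hInu, hJnu, hIJ⟩]
    have hterm : ∀ A ∈ Iᶜ.powerset, ∀ B ∈ Jᶜ.powerset,
        X (I ∪ A) (J ∪ B) I J
          = (if A.card + B.card ≤ t then (-1:ℝ)^(A.card + B.card) else 0) /
              ((∑ i ∈ Iᶜ, r i) * (∑ j ∈ Jᶜ, c j)) := by
      intro A hA B hB
      rw [Finset.mem_powerset] at hA hB
      have hdA : Disjoint I A := by
        rw [Finset.disjoint_left]
        intro x hxI hxA
        exact (Finset.mem_compl.mp (hA hxA)) hxI
      have hdB : Disjoint J B := by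
        rw [Finset.disjoint_left]
        intro x hxJ hxB
        exact (Finset.mem_compl.mp (hB hxB)) hxJ
      have cardA : (I ∪ A).card = I.card + A.card := Finset.card_union_of_disjoint hdA
      have cardB : (J ∪ B).card = J.card + B.card := Finset.card_union_of_disjoint hdB
      by_cases hc2 : A.card + B.card ≤ t
      · have hne1 : I ∪ A ≠ Finset.univ := by
          intro hEq
          have : (I ∪ A).card = m := by rw [hEq, Finset.card_univ, Fintype.card_fin]
          omega
        have hne2 : J ∪ B ≠ Finset.univ := by
          intro hEq
          have : (J ∪ B).card = n := by rw [hEq, Finset.card_univ, Fintype.card_fin]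
          omega
        simp only [hX]
        rw [if_pos hc2, if_pos ⟨hne1, hne2, by omega⟩]
        congr 2
        omega
      · have hnc : ¬(I ∪ A ≠ Finset.univ ∧ J ∪ B ≠ Finset.univ ∧
            (I ∪ A).card + (J ∪ B).card < k) := by
          rintro ⟨-, -, hlt⟩
          omega
        simp only [hX]
        rw [if_neg hnc, if_neg hc2, zero_div]
    rw [Finset.sum_congr rfl (fun A hA => Finset.sum_congr rfl (fun B hB => hterm A hA B hB))]
    simp_rw [← Finset.sum_div]
    congr 1
    -- now the pure combinatorial sum
    have Mcard : Iᶜ.card = m - I.card := by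
      rw [Finset.card_compl, Fintype.card_fin]
    have Ncard : Jᶜ.card = n - J.card := by
      rw [Finset.card_compl, Fintype.card_fin]
    rw [powerset_sum_card Iᶜ (fun a => ∑ B ∈ Jᶜ.powerset,
        if a + B.card ≤ t then (-1:ℝ)^(a + B.card) else 0)]
    rw [Finset.sum_congr rfl (fun a _ => by
      rw [powerset_sum_card Jᶜ (fun b => if a + b ≤ t then (-1:ℝ)^(a + b) else 0)])]
    -- shrink ranges to t+1
    have htM : t + 1 ≤ Iᶜ.card + 1 := by omega
    have htN : t + 1 ≤ Jᶜ.card + 1 := by omega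
    have shrink1 : (∑ a ∈ Finset.range (Iᶜ.card + 1), ((Iᶜ.card.choose a : ℝ) *
          ∑ b ∈ Finset.range (Jᶜ.card + 1), (Jᶜ.card.choose b : ℝ) *
            (if a + b ≤ t then (-1:ℝ)^(a + b) else 0)))
        = ∑ a ∈ Finset.range (t + 1), ((Iᶜ.card.choose a : ℝ) *
          ∑ b ∈ Finset.range (t + 1), (Jᶜ.card.choose b : ℝ) *
            (if a + b ≤ t then (-1:ℝ)^(a + b) else 0)) := by
      rw [← Finset.sum_subset (Finset.range_subset_range.mpr htM)]
      · refine Finset.sum_congr rfl fun a ha => ?_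
        rw [Finset.mem_range] at ha
        congr 1
        rw [← Finset.sum_subset (Finset.range_subset_range.mpr htN)]
        intro b _ hb
        rw [Finset.mem_range] at hb
        rw [if_neg (by omega), mul_zero]
      · intro a _ ha
        rw [Finset.mem_range] at ha
        rw [Finset.sum_eq_zero, mul_zero]
        intro b _
        rw [if_neg (by omega), mul_zero]
    rw [shrink1]
    -- apply keyC
    have hN1 : 1 ≤ Jᶜ.card := by omega
    obtain ⟨N0, hN0⟩ : ∃ N0, Jᶜ.card = N0 + 1 := ⟨Jᶜ.card - 1, by omega⟩
    have := keyC Iᶜ.card N0 t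
    rw [← hN0] at this
    have hrw : ∀ a ∈ Finset.range (t+1), ((Iᶜ.card.choose a : ℝ) *
          ∑ b ∈ Finset.range (t + 1), (Jᶜ.card.choose b : ℝ) *
            (if a + b ≤ t then (-1:ℝ)^(a + b) else 0))
        = ∑ b ∈ Finset.range (t+1),
            (if a + b ≤ t then (-1:ℝ)^(a+b) * (Iᶜ.card.choose a : ℝ) * (Jᶜ.card.choose b : ℝ)
             else 0) := by
      intro a _
      rw [Finset.mul_sum]
      refine Finset.sum_congr rfl fun b _ => ?_
      split_ifs with h
      · ring
      · simp
    have harg : Iᶜ.card + N0 = m + n - 1 - I.card - J.card := by omega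
    rw [Finset.sum_congr rfl hrw, this, harg]
  · -- degenerate case: both sides vanish
    rw [if_neg (by tauto)]
    refine (Finset.sum_eq_zero fun A hA => Finset.sum_eq_zero fun B hB => ?_).symm
    rw [Finset.mem_powerset] at hA hB
    have h1 : I.card ≤ (I ∪ A).card := Finset.card_le_card Finset.subset_union_left
    have h2 : J.card ≤ (J ∪ B).card := Finset.card_le_card Finset.subset_union_left
    simp only [hX]
    rw [if_neg]
    rintro ⟨-, -, hlt⟩
    omega
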